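/- Let S and A be finite nonempty sets, let γ ∈ [0,1), let P : S × A → (S → ℝ) be a stochastic kernel, let R : S × A → ℝ, and let π₁, π₂ : S → (A → ℝ) assign to each state a probability distribution on A. Define the Bellman operators (T^{π_i}V)(s) = ∑_{a∈A} π_i(a|s)·(R(s,a) + γ·∑_{s'∈S} P(s'|s,a)·V(s')). Suppose V₁ and V₂ satisfy V₁ = T^{π₁}V₁ and V₂ = T^{π₂}V₂. Then max_{s∈S} |V₁(s) − V₂(s)| ≤ (1/(1−γ))·max_{s∈S} |(T^{π₁}V₁)(s) − (T^{π₂}V₁)(s)|. -/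
import Mathlib


/-- fixed-point perturbation bound for Bellman operators:
if `V₁ = T^{π₁}V₁` and `V₂ = T^{π₂}V₂`, then
`max_s |V₁(s) − V₂(s)| ≤ (1/(1−γ))·max_s |(T^{π₁}V₁)(s) − (T^{π₂}V₁)(s)|`. -/
theorem bellman_fixed_point_perturbation
    {S : Type*} {A : Type*} [Fintype S] [Fintype A] [Nonempty S] [Nonempty A]
    (γ : ℝ) (hγ : γ ∈ Set.Ico (0 : ℝ) 1)
    (P : S × A → S → ℝ)
    (hPnonneg : ∀ p s', 0 ≤ P p s') (hPsum : ∀ p, ∑ s', P p s' = 1)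
    (R : S × A → ℝ)
    (π₁ π₂ : S → A → ℝ)
    (hπ₁nonneg : ∀ s a, 0 ≤ π₁ s a) (hπ₁sum : ∀ s, ∑ a, π₁ s a = 1)
    (hπ₂nonneg : ∀ s a, 0 ≤ π₂ s a) (hπ₂sum : ∀ s, ∑ a, π₂ s a = 1)
    (T₁ T₂ : (S → ℝ) → (S → ℝ))
    (hT₁ : ∀ V s, T₁ V s = ∑ a, π₁ s a * (R (s, a) + γ * ∑ s', P (s, a) s' * V s'))
    (hT₂ : ∀ V s, T₂ V s = ∑ a, π₂ s a * (R (s, a) + γ * ∑ s', P (s, a) s' * V s'))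
    (V₁ V₂ : S → ℝ) (hV₁ : T₁ V₁ = V₁) (hV₂ : T₂ V₂ = V₂) :
    Finset.univ.sup' Finset.univ_nonempty (fun s : S => |V₁ s - V₂ s|) ≤
      (1 / (1 - γ)) *
        Finset.univ.sup' Finset.univ_nonempty
          (fun s : S => |T₁ V₁ s - T₂ V₁ s|) := by
  obtain ⟨hγ0, hγ1⟩ := hγ
  set M := Finset.univ.sup' Finset.univ_nonempty (fun s : S => |V₁ s - V₂ s|) with hM
  set D := Finset.univ.sup' Finset.univ_nonempty (fun s : S => |T₁ V₁ s - T₂ V₁ s|) with hD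
  have hMle : ∀ s : S, |V₁ s - V₂ s| ≤ M := fun s =>
    Finset.le_sup' (fun s : S => |V₁ s - V₂ s|) (Finset.mem_univ s)
  have key : ∀ s : S, |V₁ s - V₂ s| ≤ D + γ * M := by
    intro s
    have hsplit : V₁ s - V₂ s = (T₁ V₁ s - T₂ V₁ s) + (T₂ V₁ s - T₂ V₂ s) := by
      rw [hV₁, hV₂]; ring
    have h1 : |T₁ V₁ s - T₂ V₁ s| ≤ D :=
      Finset.le_sup' (fun s : S => |T₁ V₁ s - T₂ V₁ s|) (Finset.mem_univ s)
    have hx : ∀ a : A, ∑ s', P (s, a) s' * V₁ s' - ∑ s', P (s, a) s' * V₂ s'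
        = ∑ s', P (s, a) s' * (V₁ s' - V₂ s') := by
      intro a
      rw [← Finset.sum_sub_distrib]
      exact Finset.sum_congr rfl fun _ _ => (mul_sub _ _ _).symm
    have heq : T₂ V₁ s - T₂ V₂ s
        = ∑ a, π₂ s a * (γ * ∑ s', P (s, a) s' * (V₁ s' - V₂ s')) := by
      rw [hT₂, hT₂, ← Finset.sum_sub_distrib]
      refine Finset.sum_congr rfl fun a _ => ?_
      rw [← hx a]; ring
    have h2 : |T₂ V₁ s - T₂ V₂ s| ≤ γ * M := by
      rw [heq]
      calc |∑ a, π₂ s a * (γ * ∑ s', P (s, a) s' * (V₁ s' - V₂ s'))|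
          ≤ ∑ a, |π₂ s a * (γ * ∑ s', P (s, a) s' * (V₁ s' - V₂ s'))| :=
            Finset.abs_sum_le_sum_abs _ _
        _ ≤ ∑ a, π₂ s a * (γ * M) := by
            refine Finset.sum_le_sum fun a _ => ?_
            rw [abs_mul, abs_mul, abs_of_nonneg (hπ₂nonneg s a), abs_of_nonneg hγ0]
            have hin : |∑ s', P (s, a) s' * (V₁ s' - V₂ s')| ≤ M := by
              calc |∑ s', P (s, a) s' * (V₁ s' - V₂ s')|
                  ≤ ∑ s', |P (s, a) s' * (V₁ s' - V₂ s')| := Finset.abs_sum_le_sum_abs _ _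
                _ ≤ ∑ s', P (s, a) s' * M := by
                    refine Finset.sum_le_sum fun s' _ => ?_
                    rw [abs_mul, abs_of_nonneg (hPnonneg (s, a) s')]
                    exact mul_le_mul_of_nonneg_left (hMle s') (hPnonneg (s, a) s')
                _ = M := by rw [← Finset.sum_mul, hPsum, one_mul]
            exact mul_le_mul_of_nonneg_left
              (mul_le_mul_of_nonneg_left hin hγ0) (hπ₂nonneg s a)
        _ = γ * M := by rw [← Finset.sum_mul, hπ₂sum, one_mul]
    calc |V₁ s - V₂ s| = |(T₁ V₁ s - T₂ V₁ s) + (T₂ V₁ s - T₂ V₂ s)| := by rw [← hsplit]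
      _ ≤ |T₁ V₁ s - T₂ V₁ s| + |T₂ V₁ s - T₂ V₂ s| := abs_add_le _ _
      _ ≤ D + γ * M := add_le_add h1 h2
  have hMD : M ≤ D + γ * M := Finset.sup'_le _ _ fun s _ => key s
  rw [one_div, mul_comm, ← div_eq_mul_inv, le_div_iff₀ (by linarith)]
  nlinarith
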